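/- There exist constants τ > 0 and c > 0 such that for every positive integer n and every set S = {a_1 < a_2 < ... < a_k} ⊆ {1, ..., n} with k > (1 - τ)·n, one has log M(a_1, ..., a_k) > c·n. -/

import Mathlib

set_option maxHeartbeats 1000000

open Finset

namespace Stmt1Aux

lemma abs_one_sub_exp {θ : ℝ} (h0 : 0 ≤ θ) (h2 : θ ≤ 2 * Real.pi) :
    ‖1 - Complex.exp ((θ : ℂ) * Complex.I)‖ = 2 * Real.sin (θ / 2) := by
  have hs : 0 ≤ Real.sin (θ / 2) :=
    Real.sin_nonneg_of_nonneg_of_le_pi (by linarith) (by linarith)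
  have hhalf : Real.sin (θ / 2) ^ 2 = 1 / 2 - Real.cos θ / 2 := by
    have := Real.sin_sq_eq_half_sub (θ / 2)
    rwa [show 2 * (θ / 2) = θ by ring] at this
  have hre : (1 - Complex.exp ((θ : ℂ) * Complex.I)).re = 1 - Real.cos θ := by
    simp [Complex.exp_ofReal_mul_I_re]
  have him : (1 - Complex.exp ((θ : ℂ) * Complex.I)).im = -Real.sin θ := by
    simp [Complex.exp_ofReal_mul_I_im]
  rw [Complex.norm_def, Complex.normSq_apply, hre, him]
  rw [show (1 - Real.cos θ) * (1 - Real.cos θ) + -Real.sin θ * -Real.sin θ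
      = (2 * Real.sin (θ / 2)) ^ 2 by nlinarith [Real.sin_sq_add_cos_sq θ]]
  exact Real.sqrt_sq (by linarith)

lemma three_mul_le_sin {x : ℝ} (h0 : 0 ≤ x) (h1 : x ≤ 1 / 6) :
    3 * x ≤ Real.sin (Real.pi * x) := by
  have hπ := Real.pi_pos
  have hconc := strictConcaveOn_sin_Icc.concaveOn
  have hmem1 : (0:ℝ) ∈ Set.Icc (0:ℝ) Real.pi := Set.mem_Icc.2 ⟨le_rfl, hπ.le⟩
  have hmem2 : Real.pi / 6 ∈ Set.Icc (0:ℝ) Real.pi := Set.mem_Icc.2 ⟨by positivity, by linarith⟩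
  have key := hconc.2 hmem1 hmem2 (show (0:ℝ) ≤ 1 - 6 * x by linarith)
      (show (0:ℝ) ≤ 6 * x by linarith) (show (1 - 6 * x) + 6 * x = 1 by ring)
  have harg : (1 - 6 * x) • (0:ℝ) + (6 * x) • (Real.pi / 6) = Real.pi * x := by
    simp only [smul_eq_mul]; ring
  rw [harg] at key
  simp only [smul_eq_mul, Real.sin_zero, Real.sin_pi_div_six, mul_zero] at key
  linarith

lemma sin_pi_mul_ge {t x : ℝ} (ht0 : 0 ≤ t) (ht : t ≤ 1 / 2) (h1 : t ≤ x) (h2 : x ≤ 1 - t) :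
    Real.sin (Real.pi * t) ≤ Real.sin (Real.pi * x) := by
  have hπ := Real.pi_pos
  have mono : ∀ u v : ℝ, 0 ≤ u → u ≤ v → v ≤ 1 / 2 →
      Real.sin (Real.pi * u) ≤ Real.sin (Real.pi * v) := by
    intro u v hu huv hv
    have hm1 : Real.pi * u ∈ Set.Icc (-(Real.pi/2)) (Real.pi/2) :=
      ⟨by nlinarith, by nlinarith⟩
    have hm2 : Real.pi * v ∈ Set.Icc (-(Real.pi/2)) (Real.pi/2) :=
      ⟨by nlinarith, by nlinarith⟩
    exact Real.strictMonoOn_sin.monotoneOn hm1 hm2 (by nlinarith)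
  rcases le_or_gt x (1 / 2) with hx | hx
  · exact mono t x ht0 h1 hx
  · have hx' : Real.sin (Real.pi * x) = Real.sin (Real.pi * (1 - x)) := by
      rw [← Real.sin_pi_sub]; ring_nf
    rw [hx']
    exact mono t (1 - x) ht0 (by linarith) (by linarith)

lemma log_factorial_ge (K : ℕ) : (K : ℝ) * Real.log K - K ≤ Real.log (Nat.factorial K) := by
  induction K with
  | zero => simp
  | succ K ih =>
    have hfact : Real.log (Nat.factorial (K + 1))
        = Real.log ((K : ℝ) + 1) + Real.log (Nat.factorial K) := by
      rw [Nat.factorial_succ]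
      push_cast
      rw [Real.log_mul (by positivity) (by positivity)]
    rcases Nat.eq_zero_or_pos K with h0 | hK
    · subst h0; simp [hfact]
    · have hKR : (1 : ℝ) ≤ (K:ℝ) := by exact_mod_cast hK
      have hstep : Real.log ((K : ℝ) + 1) - Real.log K ≤ 1 / K := by
        rw [← Real.log_div (by positivity) (by positivity)]
        have h := Real.log_le_sub_one_of_pos (show (0:ℝ) < ((K:ℝ)+1)/K by positivity)
        have he : ((K:ℝ)+1)/K - 1 = 1/K := by field_simp; ring
        linarith
      have h2 : (K : ℝ) * Real.log ((K:ℝ)+1) - (K:ℝ) * Real.log K ≤ 1 := by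
        have := mul_le_mul_of_nonneg_left hstep (by positivity : (0:ℝ) ≤ (K:ℝ))
        rw [mul_one_div, div_self (by positivity : (K:ℝ) ≠ 0)] at this
        nlinarith [this]
      rw [hfact]
      push_cast
      nlinarith [h2, ih]

lemma neg_block {m K : ℕ} (hm : 1 ≤ m) (hK : 30 * K ≤ m) :
    -(m : ℝ) / 30 ≤ ∑ a ∈ Finset.Icc 1 K, Real.log (30 * (a : ℝ) / m) := by
  have hmR : (0:ℝ) < m := by exact_mod_cast hm
  rcases Nat.eq_zero_or_pos K with h0 | hKpos
  · subst h0
    rw [Finset.Icc_eq_empty_of_lt (by norm_num : (0:ℕ) < 1), Finset.sum_empty]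
    linarith
  · have hKR : (0:ℝ) < K := by exact_mod_cast hKpos
    have hprod : (∏ a ∈ Finset.Icc 1 K, (a:ℝ)) = (Nat.factorial K : ℝ) := by
      rw [← Nat.cast_prod]
      congr 1
      rw [← Finset.Ico_add_one_right_eq_Icc]
      exact Finset.prod_Ico_id_eq_factorial K
    have hlogfact : ∑ a ∈ Finset.Icc 1 K, Real.log (a:ℝ) = Real.log (Nat.factorial K) := by
      rw [← hprod, Real.log_prod]
      intro a ha
      have : 1 ≤ a := (Finset.mem_Icc.mp ha).1
      have : (0:ℝ) < a := by exact_mod_cast this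
      exact ne_of_gt this
    have hsum : ∑ a ∈ Finset.Icc 1 K, Real.log (30 * (a:ℝ) / m)
        = K * Real.log 30 + Real.log (Nat.factorial K) - K * Real.log m := by
      have h1 : ∀ a ∈ Finset.Icc 1 K, Real.log (30 * (a:ℝ) / m)
          = Real.log 30 + Real.log (a:ℝ) - Real.log m := by
        intro a ha
        have ha1 : 1 ≤ a := (Finset.mem_Icc.mp ha).1
        have haR : (0:ℝ) < a := by exact_mod_cast ha1
        rw [Real.log_div (by positivity) (by positivity),
          Real.log_mul (by norm_num) (by positivity)]
      rw [Finset.sum_congr rfl h1, Finset.sum_sub_distrib, Finset.sum_add_distrib,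
        Finset.sum_const, Finset.sum_const, Nat.card_Icc, hlogfact]
      simp only [Nat.add_sub_cancel, nsmul_eq_mul]
  
    set u : ℝ := 30 * (K:ℝ) / m with hu
    have hu0 : (0:ℝ) < u := by positivity
    have hu1 : u ≤ 1 := by
      rw [hu, div_le_one hmR]
      exact_mod_cast hK
    have hkey : -1 ≤ u * Real.log u - u := by
      have h := Real.log_le_sub_one_of_pos (show (0:ℝ) < u⁻¹ by positivity)
      rw [Real.log_inv] at h
      nlinarith [mul_le_mul_of_nonneg_left h hu0.le, mul_inv_cancel₀ (ne_of_gt hu0)]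
    have hmu : (m:ℝ)/30 * u = K := by rw [hu]; field_simp
    have hlogu : Real.log u = Real.log 30 + Real.log K - Real.log m := by
      rw [hu, Real.log_div (by positivity) (by positivity),
        Real.log_mul (by norm_num) (by positivity)]
    have hmul := mul_le_mul_of_nonneg_left hkey (show (0:ℝ) ≤ (m:ℝ)/30 by positivity)
    have hexpand : (m:ℝ)/30 * (u * Real.log u - u) = (K:ℝ) * Real.log u - K := by
      rw [mul_sub, ← mul_assoc, hmu]
    rw [hexpand, hlogu] at hmul
    have hfac := log_factorial_ge K
    rw [hsum]
    nlinarith [hmul, hfac]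



lemma prod_le_two_pow (S : Finset ℕ) (z : Metric.sphere (0:ℂ) 1) :
    ∏ a ∈ S, ‖1 - (z : ℂ) ^ a‖ ≤ 2 ^ S.card := by
  have hz : ‖(z : ℂ)‖ = 1 := by
    have := z.2
    rwa [mem_sphere_zero_iff_norm] at this
  calc ∏ a ∈ S, ‖1 - (z : ℂ) ^ a‖ ≤ ∏ _a ∈ S, (2:ℝ) := by
        refine Finset.prod_le_prod (fun a _ => norm_nonneg _) (fun a _ => ?_)
        have h1 := norm_sub_le (1:ℂ) ((z:ℂ)^a)
        rw [norm_one,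
          norm_pow, hz, one_pow] at h1
        linarith
    _ = 2 ^ S.card := by rw [Finset.prod_const]

end Stmt1Aux

open Stmt1Aux

/-- `Mset S` is the maximum over `z` on the unit circle of `∏_{a ∈ S} |1 - z^a|`. -/
noncomputable def Mset (S : Finset ℕ) : ℝ :=
  ⨆ z : Metric.sphere (0 : ℂ) 1, ∏ a ∈ S, ‖1 - (z : ℂ) ^ a‖

lemma le_Mset (S : Finset ℕ) (z : Metric.sphere (0:ℂ) 1) :
    ∏ a ∈ S, ‖1 - (z : ℂ) ^ a‖ ≤ Mset S := by
  unfold Mset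
  exact le_ciSup ⟨(2:ℝ) ^ S.card, by rintro x ⟨z', rfl⟩; exact prod_le_two_pow S z'⟩ z

theorem stmt1 :
    ∃ τ : ℝ, 0 < τ ∧ ∃ c : ℝ, 0 < c ∧
      ∀ n : ℕ, 0 < n → ∀ S : Finset ℕ, S ⊆ Finset.Icc 1 n →
        (1 - τ) * n < S.card → c * n < Real.log (Mset S) := by
  refine ⟨1/100, by norm_num, 1/100, by norm_num, ?_⟩
  intro n hn S hsub hcard
  have hScard_le : S.card ≤ n := by
    have := Finset.card_le_card hsub
    simpa [Nat.card_Icc] using this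
  rcases lt_or_ge n 100 with hsmall | hbig
  · -- small case : S = Icc 1 n, use primitive root of order n+1
    have hn99R : (n:ℝ) ≤ 99 := by exact_mod_cast (by omega : n ≤ 99)
    have hcardn : S.card = n := by
      have h1 : (n:ℝ) < (S.card:ℝ) + 1 := by nlinarith [hcard]
      have h2 : n < S.card + 1 := by exact_mod_cast h1
      omega
    have hS : S = Finset.Icc 1 n :=
      Finset.eq_of_subset_of_card_le hsub (by simp [Nat.card_Icc, hcardn])
    set ζ : ℂ := Complex.exp (2 * Real.pi * Complex.I / ((n+1 : ℕ) : ℂ)) with hζdef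
    have hζ : IsPrimitiveRoot ζ (n+1) := Complex.isPrimitiveRoot_exp _ (Nat.succ_ne_zero n)
    have hζsph : ζ ∈ Metric.sphere (0:ℂ) 1 := by
      rw [mem_sphere_zero_iff_norm]
      rw [show ζ = Complex.exp (((2*Real.pi/((n+1:ℕ):ℝ) : ℝ) : ℂ) * Complex.I) by
        rw [hζdef]; congr 1; push_cast; ring]
      exact Complex.norm_exp_ofReal_mul_I _
    have hprodC : ∏ a ∈ Finset.Icc 1 n, (1 - ζ ^ a) = (n:ℂ) + 1 := by
      have h := hζ.prod_one_sub_pow_eq_order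
      rw [← h, ← Finset.Ico_add_one_right_eq_Icc, Finset.prod_Ico_eq_prod_range]
      simp [add_comm]
    have habs : ∏ a ∈ Finset.Icc 1 n, ‖1 - ζ ^ a‖ = (n:ℝ) + 1 := by
      rw [← norm_prod, hprodC]
      rw [show ((n:ℂ) + 1) = ((n+1 : ℕ) : ℂ) by push_cast; ring, Complex.norm_natCast]
      push_cast; ring
    have hMset : (n:ℝ) + 1 ≤ Mset S := by
      rw [hS, ← habs]
      exact le_Mset (Finset.Icc 1 n) ⟨ζ, hζsph⟩
    have hlogn : (1:ℝ)/100 * n < Real.log ((n:ℝ)+1) := by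
      rcases Nat.lt_or_ge n 2 with h2 | h2
      · have hone : n = 1 := by omega
        subst hone
        have := Real.log_two_gt_d9
        have h21 : ((1:ℕ):ℝ) + 1 = 2 := by norm_num
        rw [h21]
        push_cast
        linarith
      · have h3 : (3:ℝ) ≤ (n:ℝ) + 1 := by
          have : (2:ℝ) ≤ n := by exact_mod_cast h2
          linarith
        have hlog3 : (1:ℝ) < Real.log 3 := by
          rw [Real.lt_log_iff_exp_lt (by norm_num : (0:ℝ) < 3)]
          calc Real.exp 1 < 2.7182818286 := Real.exp_one_lt_d9
            _ < 3 := by norm_num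
        have hmono : Real.log 3 ≤ Real.log ((n:ℝ)+1) :=
          Real.log_le_log (by norm_num) h3
        linarith
    calc (1:ℝ)/100 * n < Real.log ((n:ℝ)+1) := hlogn
      _ ≤ Real.log (Mset S) := Real.log_le_log (by positivity) hMset
  · -- main case : n ≥ 100
    have hn100R : (100:ℝ) ≤ (n:ℝ) := by exact_mod_cast hbig
    set m : ℕ := 6 * n + 1 with hmdef
    have hm1 : 1 ≤ m := by omega
    have hmR : (0:ℝ) < (m:ℝ) := by positivity
    have hmR6 : (m:ℝ) = 6*(n:ℝ)+1 := by rw [hmdef]; push_cast; ring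
    have hπ := Real.pi_pos
    set θ₀ : ℝ := 2 * Real.pi * (5 / (m:ℝ)) with hθ₀
    have hθ₀pos : 0 < θ₀ := by rw [hθ₀]; positivity
    have hzmem : Complex.exp ((θ₀:ℂ) * Complex.I) ∈ Metric.sphere (0:ℂ) 1 := by
      rw [mem_sphere_zero_iff_norm]
      exact Complex.norm_exp_ofReal_mul_I _
    set Z : Metric.sphere (0:ℂ) 1 := ⟨Complex.exp ((θ₀:ℂ) * Complex.I), hzmem⟩ with hZ
    set g : ℕ → ℝ := fun a => Real.log (2 * Real.sin (Real.pi * (5 * (a:ℝ) / (m:ℝ)))) with hg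
    -- pointwise description of |1 - Z^a|
    have habs : ∀ a ∈ Finset.Icc 1 n,
        ‖1 - (Z:ℂ) ^ a‖ = 2 * Real.sin (Real.pi * (5 * (a:ℝ) / (m:ℝ))) := by
      intro a ha
      obtain ⟨ha1, han⟩ := Finset.mem_Icc.mp ha
      have hanR : (a:ℝ) ≤ (n:ℝ) := by exact_mod_cast han
      have hZpow : (Z:ℂ) ^ a
          = Complex.exp (((2*Real.pi*(5*(a:ℝ)/(m:ℝ)) : ℝ) : ℂ) * Complex.I) := by
        rw [hZ, ← Complex.exp_nat_mul]
        congr 1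
        rw [hθ₀]
        push_cast
        ring
      have hxle : 5*(a:ℝ)/(m:ℝ) ≤ 1 := by
        rw [div_le_one hmR]; nlinarith
      rw [hZpow, abs_one_sub_exp (by positivity)
        (by nlinarith [hxle, hπ] : 2*Real.pi*(5*(a:ℝ)/(m:ℝ)) ≤ 2*Real.pi)]
      congr 1
      ring
    have hsinpos : ∀ a ∈ Finset.Icc 1 n,
        0 < 2 * Real.sin (Real.pi * (5 * (a:ℝ) / (m:ℝ))) := by
      intro a ha
      obtain ⟨ha1, han⟩ := Finset.mem_Icc.mp ha
      have ha1R : (1:ℝ) ≤ (a:ℝ) := by exact_mod_cast ha1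
      have hanR : (a:ℝ) ≤ (n:ℝ) := by exact_mod_cast han
      have hx0 : 0 < 5 * (a:ℝ) / (m:ℝ) := by positivity
      have hx1 : 5 * (a:ℝ) / (m:ℝ) < 1 := by
        rw [div_lt_one hmR]; nlinarith
      have := Real.sin_pos_of_pos_of_lt_pi (x := Real.pi * (5 * (a:ℝ) / (m:ℝ)))
        (by positivity) (by nlinarith)
      linarith
    -- cut points
    set K : ℕ := m / 30 with hKdef
    set c₁ : ℕ := m / 20 with hc₁def
    set c₂ : ℕ := m / 15 with hc₂def
    set c₃ : ℕ := 2 * m / 15 with hc₃def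
    set c₄ : ℕ := 3 * m / 20 with hc₄def
    -- generic nonnegativity on the middle range
    have hge0 : ∀ a : ℕ, m < 30 * a → a ≤ n → 0 ≤ g a := by
      intro a h30 han
      have hanR : (a:ℝ) ≤ (n:ℝ) := by exact_mod_cast han
      have h30R : (m:ℝ) < 30 * (a:ℝ) := by exact_mod_cast h30
      have hx1 : (1:ℝ)/6 ≤ 5 * (a:ℝ) / (m:ℝ) := by
        rw [le_div_iff₀ hmR]; nlinarith
      have hx2 : 5 * (a:ℝ) / (m:ℝ) ≤ 1 - 1/6 := by
        rw [div_le_iff₀ hmR]; nlinarith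
      have hs := sin_pi_mul_ge (t := 1/6) (by norm_num) (by norm_num) hx1 hx2
      rw [show Real.pi * (1/6) = Real.pi/6 by ring, Real.sin_pi_div_six] at hs
      simp only [hg]
      apply Real.log_nonneg; linarith
    -- block 1
    have hB1 : -(m:ℝ)/30 ≤ ∑ a ∈ Finset.Ioc 0 K, g a := by
      rw [show Finset.Ioc 0 K = Finset.Icc 1 K from (Finset.Icc_add_one_left_eq_Ioc 0 K).symm]
      refine le_trans (neg_block hm1 (by omega)) (Finset.sum_le_sum ?_)
      intro a ha
      obtain ⟨ha1, haK⟩ := Finset.mem_Icc.mp ha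
      have ha1R : (1:ℝ) ≤ (a:ℝ) := by exact_mod_cast ha1
      have h30 : 30 * a ≤ m := by omega
      have h30R : 30 * (a:ℝ) ≤ (m:ℝ) := by exact_mod_cast h30
      have hx6 : 5 * (a:ℝ) / (m:ℝ) ≤ 1/6 := by
        rw [div_le_iff₀ hmR]; nlinarith
      have hchord := three_mul_le_sin (by positivity : (0:ℝ) ≤ 5 * (a:ℝ) / (m:ℝ)) hx6
      simp only [hg]
      apply Real.log_le_log (by positivity)
      have hxm : 5 * (a:ℝ) = (5 * (a:ℝ) / (m:ℝ)) * (m:ℝ) :=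
        (div_mul_cancel₀ _ (ne_of_gt hmR)).symm
      rw [div_le_iff₀ hmR]
      nlinarith [mul_le_mul_of_nonneg_right hchord hmR.le, hxm]
    -- block 2
    have hB2 : (0:ℝ) ≤ ∑ a ∈ Finset.Ioc K c₁, g a := by
      refine Finset.sum_nonneg fun a ha => ?_
      obtain ⟨h1, h2⟩ := Finset.mem_Ioc.mp ha
      exact hge0 a (by omega) (by omega)
    -- block 3
    have hB3 : ((c₂:ℝ) - (c₁:ℝ)) * (Real.log 2 / 2) ≤ ∑ a ∈ Finset.Ioc c₁ c₂, g a := by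
      have hpt : ∀ a ∈ Finset.Ioc c₁ c₂, Real.log 2 / 2 ≤ g a := by
        intro a ha
        obtain ⟨h1, h2⟩ := Finset.mem_Ioc.mp ha
        have hl : m < 20 * a := by omega
        have hu : 15 * a ≤ m := by omega
        have hlR : (m:ℝ) < 20 * (a:ℝ) := by exact_mod_cast hl
        have huR : 15 * (a:ℝ) ≤ (m:ℝ) := by exact_mod_cast hu
        have hx1 : (1:ℝ)/4 ≤ 5 * (a:ℝ) / (m:ℝ) := by
          rw [le_div_iff₀ hmR]; nlinarith
        have hx2 : 5 * (a:ℝ) / (m:ℝ) ≤ 1 - 1/4 := by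
          rw [div_le_iff₀ hmR]; nlinarith
        have hs := sin_pi_mul_ge (t := 1/4) (by norm_num) (by norm_num) hx1 hx2
        rw [show Real.pi * (1/4) = Real.pi/4 by ring, Real.sin_pi_div_four] at hs
        simp only [hg]
        calc Real.log 2 / 2 = Real.log (Real.sqrt 2) := (Real.log_sqrt (by norm_num)).symm
          _ ≤ _ := Real.log_le_log (Real.sqrt_pos.mpr (by norm_num)) (by linarith)
      have hcs := Finset.card_nsmul_le_sum (Finset.Ioc c₁ c₂) g (Real.log 2 / 2) hpt
      rw [Nat.card_Ioc, nsmul_eq_mul, Nat.cast_sub (by omega)] at hcs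
      exact hcs
    -- block 4
    have hB4 : ((c₃:ℝ) - (c₂:ℝ)) * (Real.log 3 / 2) ≤ ∑ a ∈ Finset.Ioc c₂ c₃, g a := by
      have hpt : ∀ a ∈ Finset.Ioc c₂ c₃, Real.log 3 / 2 ≤ g a := by
        intro a ha
        obtain ⟨h1, h2⟩ := Finset.mem_Ioc.mp ha
        have hl : m < 15 * a := by omega
        have hu : 15 * a ≤ 2 * m := by omega
        have hlR : (m:ℝ) < 15 * (a:ℝ) := by exact_mod_cast hl
        have huR : 15 * (a:ℝ) ≤ 2 * (m:ℝ) := by exact_mod_cast hu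
        have hx1 : (1:ℝ)/3 ≤ 5 * (a:ℝ) / (m:ℝ) := by
          rw [le_div_iff₀ hmR]; nlinarith
        have hx2 : 5 * (a:ℝ) / (m:ℝ) ≤ 1 - 1/3 := by
          rw [div_le_iff₀ hmR]; nlinarith
        have hs := sin_pi_mul_ge (t := 1/3) (by norm_num) (by norm_num) hx1 hx2
        rw [show Real.pi * (1/3) = Real.pi/3 by ring, Real.sin_pi_div_three] at hs
        simp only [hg]
        calc Real.log 3 / 2 = Real.log (Real.sqrt 3) := (Real.log_sqrt (by norm_num)).symm
          _ ≤ _ := Real.log_le_log (Real.sqrt_pos.mpr (by norm_num)) (by linarith)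
      have hcs := Finset.card_nsmul_le_sum (Finset.Ioc c₂ c₃) g (Real.log 3 / 2) hpt
      rw [Nat.card_Ioc, nsmul_eq_mul, Nat.cast_sub (by omega)] at hcs
      exact hcs
    -- block 5
    have hB5 : ((c₄:ℝ) - (c₃:ℝ)) * (Real.log 2 / 2) ≤ ∑ a ∈ Finset.Ioc c₃ c₄, g a := by
      have hpt : ∀ a ∈ Finset.Ioc c₃ c₄, Real.log 2 / 2 ≤ g a := by
        intro a ha
        obtain ⟨h1, h2⟩ := Finset.mem_Ioc.mp ha
        have hl : 2 * m < 15 * a := by omega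
        have hu : 20 * a ≤ 3 * m := by omega
        have hlR : 2 * (m:ℝ) < 15 * (a:ℝ) := by exact_mod_cast hl
        have huR : 20 * (a:ℝ) ≤ 3 * (m:ℝ) := by exact_mod_cast hu
        have hx1 : (1:ℝ)/4 ≤ 5 * (a:ℝ) / (m:ℝ) := by
          rw [le_div_iff₀ hmR]; nlinarith
        have hx2 : 5 * (a:ℝ) / (m:ℝ) ≤ 1 - 1/4 := by
          rw [div_le_iff₀ hmR]; nlinarith
        have hs := sin_pi_mul_ge (t := 1/4) (by norm_num) (by norm_num) hx1 hx2
        rw [show Real.pi * (1/4) = Real.pi/4 by ring, Real.sin_pi_div_four] at hs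
        simp only [hg]
        calc Real.log 2 / 2 = Real.log (Real.sqrt 2) := (Real.log_sqrt (by norm_num)).symm
          _ ≤ _ := Real.log_le_log (Real.sqrt_pos.mpr (by norm_num)) (by linarith)
      have hcs := Finset.card_nsmul_le_sum (Finset.Ioc c₃ c₄) g (Real.log 2 / 2) hpt
      rw [Nat.card_Ioc, nsmul_eq_mul, Nat.cast_sub (by omega)] at hcs
      exact hcs
    -- block 6
    have hB6 : (0:ℝ) ≤ ∑ a ∈ Finset.Ioc c₄ n, g a := by
      refine Finset.sum_nonneg fun a ha => ?_
      obtain ⟨h1, h2⟩ := Finset.mem_Ioc.mp ha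
      exact hge0 a (by omega) h2
    -- assemble the six blocks
    have e1 := Finset.sum_Ioc_consecutive g (by omega : 0 ≤ K) (by omega : K ≤ c₁)
    have e2 := Finset.sum_Ioc_consecutive g (by omega : 0 ≤ c₁) (by omega : c₁ ≤ c₂)
    have e3 := Finset.sum_Ioc_consecutive g (by omega : 0 ≤ c₂) (by omega : c₂ ≤ c₃)
    have e4 := Finset.sum_Ioc_consecutive g (by omega : 0 ≤ c₃) (by omega : c₃ ≤ c₄)
    have e5 := Finset.sum_Ioc_consecutive g (by omega : 0 ≤ c₄) (by omega : c₄ ≤ n)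
    have htotal : -(m:ℝ)/30 + ((c₂:ℝ) - (c₁:ℝ)) * (Real.log 2 / 2)
        + ((c₃:ℝ) - (c₂:ℝ)) * (Real.log 3 / 2) + ((c₄:ℝ) - (c₃:ℝ)) * (Real.log 2 / 2)
        ≤ ∑ a ∈ Finset.Icc 1 n, g a := by
      rw [show Finset.Icc 1 n = Finset.Ioc 0 n from Finset.Icc_add_one_left_eq_Ioc 0 n]
      linarith [hB1, hB2, hB3, hB4, hB5, hB6, e1, e2, e3, e4, e5]
    -- sum over S
    have hsdiff := Finset.sum_sdiff (f := g) hsub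
    have hdel : ∑ a ∈ Finset.Icc 1 n \ S, g a ≤ ((n - S.card : ℕ):ℝ) * Real.log 2 := by
      have hcardd : (Finset.Icc 1 n \ S).card = n - S.card := by
        rw [Finset.card_sdiff_of_subset hsub, Nat.card_Icc]
        omega
      have hb : ∀ a ∈ Finset.Icc 1 n \ S, g a ≤ Real.log 2 := by
        intro a ha
        have ha' : a ∈ Finset.Icc 1 n := (Finset.mem_sdiff.mp ha).1
        have hpos := hsinpos a ha'
        have hsle : Real.sin (Real.pi * (5 * (a:ℝ) / (m:ℝ))) ≤ 1 := Real.sin_le_one _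
        simp only [hg]
        exact Real.log_le_log (by linarith) (by linarith)
      have := Finset.sum_le_card_nsmul (Finset.Icc 1 n \ S) g (Real.log 2) hb
      rwa [hcardd, nsmul_eq_mul] at this
    -- the sum over S is bounded below
    have hcardsR : ((n - S.card : ℕ):ℝ) < (n:ℝ)/100 := by
      rw [Nat.cast_sub hScard_le]
      linarith [hcard]
    -- real bounds on cut points
    have hc₁R : (c₁:ℝ) ≤ (m:ℝ)/20 := by
      have h : 20 * c₁ ≤ m := by omega
      have hR : 20 * (c₁:ℝ) ≤ (m:ℝ) := by exact_mod_cast h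
      linarith
    have hc₂Rl : (m:ℝ)/15 - 1 ≤ (c₂:ℝ) := by
      have h : m ≤ 15 * c₂ + 14 := by omega
      have hR : (m:ℝ) ≤ 15 * (c₂:ℝ) + 14 := by exact_mod_cast h
      linarith
    have hc₂Ru : (c₂:ℝ) ≤ (m:ℝ)/15 := by
      have h : 15 * c₂ ≤ m := by omega
      have hR : 15 * (c₂:ℝ) ≤ (m:ℝ) := by exact_mod_cast h
      linarith
    have hc₃Rl : 2*(m:ℝ)/15 - 1 ≤ (c₃:ℝ) := by
      have h : 2 * m ≤ 15 * c₃ + 14 := by omega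
      have hR : 2 * (m:ℝ) ≤ 15 * (c₃:ℝ) + 14 := by exact_mod_cast h
      linarith
    have hc₃Ru : (c₃:ℝ) ≤ 2*(m:ℝ)/15 := by
      have h : 15 * c₃ ≤ 2 * m := by omega
      have hR : 15 * (c₃:ℝ) ≤ 2 * (m:ℝ) := by exact_mod_cast h
      linarith
    have hc₄Rl : 3*(m:ℝ)/20 - 1 ≤ (c₄:ℝ) := by
      have h : 3 * m ≤ 20 * c₄ + 19 := by omega
      have hR : 3 * (m:ℝ) ≤ 20 * (c₄:ℝ) + 19 := by exact_mod_cast h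
      linarith
    -- numeric log bounds
    have hl2l : (0.6931:ℝ) < Real.log 2 := by
      have := Real.log_two_gt_d9; linarith
    have hl2u : Real.log 2 < (0.6932:ℝ) := by
      have := Real.log_two_lt_d9; linarith
    have hl3l : (1:ℝ) < Real.log 3 := by
      rw [Real.lt_log_iff_exp_lt (by norm_num : (0:ℝ) < 3)]
      calc Real.exp 1 < 2.7182818286 := Real.exp_one_lt_d9
        _ < 3 := by norm_num
    have hl3u : Real.log 3 < (1.3864:ℝ) := by
      have h4 : Real.log 3 ≤ Real.log 4 := Real.log_le_log (by norm_num) (by norm_num)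
      have : Real.log 4 = 2 * Real.log 2 := by
        rw [show (4:ℝ) = 2^2 by norm_num, Real.log_pow]; push_cast; ring
      linarith
    -- numeric product bounds for blocks
    have hm601 : (601:ℝ) ≤ (m:ℝ) := by rw [hmR6]; linarith
    have hP3 : ((m:ℝ)/60 - 1) * 0.3465 ≤ ((c₂:ℝ) - (c₁:ℝ)) * (Real.log 2 / 2) := by
      apply mul_le_mul (by linarith) (by linarith) (by norm_num) (by linarith)
    have hP4 : ((m:ℝ)/15 - 1) * 0.5 ≤ ((c₃:ℝ) - (c₂:ℝ)) * (Real.log 3 / 2) := by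
      apply mul_le_mul (by linarith) (by linarith) (by norm_num) (by linarith)
    have hP5 : ((m:ℝ)/60 - 1) * 0.3465 ≤ ((c₄:ℝ) - (c₃:ℝ)) * (Real.log 2 / 2) := by
      apply mul_le_mul (by linarith) (by linarith) (by norm_num) (by linarith)
    have hdel2 : ((n - S.card : ℕ):ℝ) * Real.log 2 ≤ ((n:ℝ)/100) * 0.6932 := by
      apply mul_le_mul (le_of_lt hcardsR) (le_of_lt hl2u)
        (Real.log_nonneg (by norm_num)) (by positivity)
    -- lower bound for the sum over S
    have hlast : (1:ℝ)/100 * (n:ℝ) < ∑ a ∈ S, g a := by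
      have hsplit : ∑ a ∈ S, g a
          = ∑ a ∈ Finset.Icc 1 n, g a - ∑ a ∈ Finset.Icc 1 n \ S, g a := by
        linarith [hsdiff]
      rw [hsplit]
      linarith [htotal, hdel, hP3, hP4, hP5, hdel2, hmR6, hn100R]
    -- conclude
    have hprodpos : 0 < ∏ a ∈ S, ‖1 - (Z:ℂ) ^ a‖ := by
      refine Finset.prod_pos fun a ha => ?_
      rw [habs a (hsub ha)]
      exact hsinpos a (hsub ha)
    have hlogeq : Real.log (∏ a ∈ S, ‖1 - (Z:ℂ) ^ a‖) = ∑ a ∈ S, g a := by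
      rw [Real.log_prod (fun a ha => by
        rw [habs a (hsub ha)]; exact ne_of_gt (hsinpos a (hsub ha)))]
      refine Finset.sum_congr rfl fun a ha => ?_
      rw [habs a (hsub ha)]
    calc (1:ℝ)/100 * (n:ℝ) < ∑ a ∈ S, g a := hlast
      _ = Real.log (∏ a ∈ S, ‖1 - (Z:ℂ) ^ a‖) := hlogeq.symm
      _ ≤ Real.log (Mset S) := Real.log_le_log hprodpos (le_Mset S Z)
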